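/- Let q = 2^c, G = SL_2(F_q), U the subgroup of upper unitriangular matrices, B = N_G(U) the Borel subgroup of upper triangular matrices, and H an index-2 subgroup of U. Then for any base of the action of B on the cosets B/H one has size at least c, and Irred(SL_2(F_q), G/H) ≤ c; consequently Base(SL_2(2^c), G/H) = c. -/

import Mathlib

def listStab (G : Type*) {Ω : Type*} [Group G] [MulAction G Ω] (l : List Ω) : Subgroup G :=
  ⨅ ω ∈ l, MulAction.stabilizer G ω

def IsBase (G : Type*) {Ω : Type*} [Group G] [MulAction G Ω] (l : List Ω) : Prop :=
  listStab G l = ⊥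

def IsIrredundant (G : Type*) {Ω : Type*} [Group G] [MulAction G Ω] (l : List Ω) : Prop :=
  ∀ k < l.length, listStab G (l.take (k + 1)) < listStab G (l.take k)

def IsMinimalBase (G : Type*) {Ω : Type*} [Group G] [MulAction G Ω] (l : List Ω) : Prop :=
  IsBase G l ∧ ∀ l' : List Ω, l'.Sublist l → l' ≠ l → ¬ IsBase G l'

def IsIndependentSeq (G : Type*) {Ω : Type*} [Group G] [MulAction G Ω] (l : List Ω) : Prop :=
  ∀ k < l.length, listStab G (l.eraseIdx k) ≠ listStab G l

noncomputable def minBaseSize (G Ω : Type*) [Group G] [MulAction G Ω] : ℕ∞ :=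
  sInf {n : ℕ∞ | ∃ l : List Ω, IsBase G l ∧ (l.length : ℕ∞) = n}

noncomputable def maxMinBase (G Ω : Type*) [Group G] [MulAction G Ω] : ℕ∞ :=
  sSup {n : ℕ∞ | ∃ l : List Ω, IsMinimalBase G l ∧ (l.length : ℕ∞) = n}

noncomputable def heightStat (G Ω : Type*) [Group G] [MulAction G Ω] : ℕ∞ :=
  sSup {n : ℕ∞ | ∃ l : List Ω, IsIndependentSeq G l ∧ (l.length : ℕ∞) = n}

noncomputable def irredStat (G Ω : Type*) [Group G] [MulAction G Ω] : ℕ∞ :=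
  sSup {n : ℕ∞ | ∃ l : List Ω, IsIrredundant G l ∧ (l.length : ℕ∞) = n}

namespace Stmt9Aux
open MulAction Subgroup

section Generic

variable {G : Type*} [Group G] {Ω : Type*} [MulAction G Ω]

theorem mem_listStab {l : List Ω} {g : G} :
    g ∈ listStab G l ↔ ∀ ω ∈ l, g ∈ stabilizer G ω := by
  simp [listStab, Subgroup.mem_iInf, MulAction.mem_stabilizer_iff]

theorem listStab_nil : listStab G ([] : List Ω) = ⊤ := by
  ext g; simp [mem_listStab]

theorem listStab_cons {x : Ω} {l : List Ω} :
    listStab G (x :: l) = stabilizer G x ⊓ listStab G l := by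
  ext g; simp [mem_listStab]

theorem listStab_append {l₁ l₂ : List Ω} :
    listStab G (l₁ ++ l₂) = listStab G l₁ ⊓ listStab G l₂ := by
  ext g; simp [mem_listStab, or_imp, forall_and]

theorem halving {A C : Subgroup G} [Finite G] (h : A < C) :
    2 * Nat.card A ≤ Nat.card C := by
  obtain ⟨m, hm⟩ := Subgroup.card_dvd_of_le h.le
  have hA : 0 < Nat.card A := Nat.card_pos
  have hC : 0 < Nat.card C := Nat.card_pos
  have hm1 : m ≠ 1 := by
    rintro rfl
    exact h.ne (Subgroup.eq_of_le_of_card_ge h.le (by omega))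
  have hm0 : m ≠ 0 := by rintro rfl; omega
  have : 2 ≤ m := by omega
  calc 2 * Nat.card A ≤ Nat.card A * m := by nlinarith
  _ = Nat.card C := hm.symm

theorem minimalBase_irredundant [Finite G] {l : List Ω} (h : IsMinimalBase G l) :
    IsIrredundant G l := by
  intro k hk
  by_contra hlt
  have htake : l.take (k + 1) = l.take k ++ [l[k]] := by
    rw [List.take_succ, List.getElem?_eq_getElem hk]
    rfl
  have hsub : listStab G (l.take (k + 1)) ≤ listStab G (l.take k) := by
    rw [htake, listStab_append]; exact inf_le_left
  have heq : listStab G (l.take (k + 1)) = listStab G (l.take k) := by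
    rcases eq_or_lt_of_le hsub with h | h
    · exact h
    · exact absurd h hlt
  have hAS : listStab G (l.take k) ≤ stabilizer G l[k] := by
    conv_lhs => rw [← heq]
    rw [htake, listStab_append, listStab_cons, listStab_nil]
    exact le_trans inf_le_right (le_trans inf_le_left le_rfl)
  have hdecomp : l = l.take k ++ (l[k] :: l.drop (k + 1)) := by
    conv_lhs => rw [← List.take_append_drop k l]
    rw [List.drop_eq_getElem_cons hk]
  have herase : l.eraseIdx k = l.take k ++ l.drop (k + 1) := List.eraseIdx_eq_take_drop_succ l k
  have hstab_eq : listStab G (l.eraseIdx k) = listStab G l := by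
    conv_rhs => rw [hdecomp]
    rw [herase, listStab_append, listStab_append, listStab_cons]
    rw [← inf_assoc, inf_eq_left.mpr hAS]
  have hlen : (l.eraseIdx k).length < l.length := by
    rw [List.length_eraseIdx]; simp [hk]; omega
  exact h.2 (l.eraseIdx k) (List.eraseIdx_sublist l k)
    (by intro hcontra; rw [hcontra] at hlen; omega)
    (by rw [IsBase, hstab_eq]; exact h.1)

theorem length_le_of_irred [Finite G] {l : List Ω} (hirr : IsIrredundant G l) {c : ℕ}
    (hc : 1 ≤ c) (hstab : ∀ x : Ω, Nat.card (stabilizer G x) = 2 ^ (c - 1)) :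
    l.length ≤ c := by
  have chain : ∀ j i, 1 ≤ i → i + j ≤ l.length → 2 ^ j ≤ Nat.card (listStab G (l.take i)) := by
    intro j
    induction j with
    | zero =>
      intro i _ _
      simpa using Nat.one_le_iff_ne_zero.2 Nat.card_pos.ne'
    | succ j ih =>
      intro i hi hij
      have hlt := hirr i (by omega)
      have h1 := halving hlt
      have h2 := ih (i + 1) (by omega) (by omega)
      calc 2 ^ (j + 1) = 2 * 2 ^ j := by ring
      _ ≤ 2 * Nat.card (listStab G (l.take (i + 1))) := by omega
      _ ≤ Nat.card (listStab G (l.take i)) := h1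
  cases l with
  | nil => simpa using Nat.zero_le c
  | cons x t =>
    have h1 : Nat.card (listStab G ((x :: t).take 1)) = 2 ^ (c - 1) := by
      have : (x :: t).take 1 = [x] := rfl
      rw [this, listStab_cons, listStab_nil, inf_top_eq, hstab x]
    have h2 := chain ((x :: t).length - 1) 1 le_rfl (by simp only [List.length_cons]; omega)
    rw [h1] at h2
    have h3 := (Nat.pow_le_pow_iff_right one_lt_two).1 h2
    simp only [List.length_cons] at h3 ⊢
    omega

theorem index_listStab_le (V : Subgroup G) (l : List Ω)
    (h : ∀ x ∈ l, ((stabilizer G x).subgroupOf V).index ≤ 2) :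
    ((listStab G l).subgroupOf V).index ≤ 2 ^ l.length := by
  induction l with
  | nil => simp [listStab_nil, Subgroup.top_subgroupOf, Subgroup.index_top]
  | cons x t ih =>
    have hsplit : (listStab G (x :: t)).subgroupOf V
        = (stabilizer G x).subgroupOf V ⊓ (listStab G t).subgroupOf V := by
      rw [listStab_cons]
      ext g; simp [Subgroup.mem_subgroupOf]
    rw [hsplit]
    calc ((stabilizer G x).subgroupOf V ⊓ (listStab G t).subgroupOf V).index
        ≤ ((stabilizer G x).subgroupOf V).index * ((listStab G t).subgroupOf V).index :=
          Subgroup.index_inf_le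
    _ ≤ 2 * 2 ^ t.length :=
          Nat.mul_le_mul (h x List.mem_cons_self)
            (ih fun y hy => h y (List.mem_cons_of_mem x hy))
    _ = 2 ^ (x :: t).length := by rw [List.length_cons]; ring

theorem index_subgroupOf_eq_two [Finite G] {S V : Subgroup G}
    (h2 : 2 * Nat.card (S.subgroupOf V) = Nat.card V) : (S.subgroupOf V).index = 2 := by
  have h := Subgroup.card_mul_index (S.subgroupOf V)
  have hpos : 0 < Nat.card (S.subgroupOf V) := Nat.card_pos
  nlinarith [h, h2]

theorem mem_stab_mk {Γ : Type*} [Group Γ] (K : Subgroup Γ) (g x : Γ) :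
    x ∈ stabilizer Γ ((g : Γ ⧸ K)) ↔ g⁻¹ * x * g ∈ K := by
  rw [mem_stabilizer_iff]
  rw [show x • ((g : Γ ⧸ K)) = ((x * g : Γ) : Γ ⧸ K) from rfl, QuotientGroup.eq]
  rw [show (x * g)⁻¹ * g = (g⁻¹ * x * g)⁻¹ by group]
  exact K.inv_mem_iff

theorem card_stab_mk {Γ : Type*} [Group Γ] (K : Subgroup Γ) (g : Γ) :
    Nat.card (stabilizer Γ ((g : Γ ⧸ K))) = Nat.card K :=
  Nat.card_congr
    { toFun := fun x => ⟨g⁻¹ * x.1 * g, (mem_stab_mk K g x.1).1 x.2⟩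
      invFun := fun k => ⟨g * k.1 * g⁻¹, (mem_stab_mk K g _).2
        (by rw [show g⁻¹ * (g * k.1 * g⁻¹) * g = k.1 by group]; exact k.2)⟩
      left_inv := fun x => Subtype.ext (by group)
      right_inv := fun k => Subtype.ext (by group) }

end Generic

section SL
open Matrix

variable {F : Type*} [Field F]

def um (t : F) : Matrix.SpecialLinearGroup (Fin 2) F :=
  ⟨!![1, t; 0, 1], by simp [Matrix.det_fin_two_of]⟩

def dm (a : Fˣ) : Matrix.SpecialLinearGroup (Fin 2) F :=
  ⟨!![(a : F), 0; 0, ((a⁻¹ : Fˣ) : F)], by simp [Matrix.det_fin_two_of]⟩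

@[simp] theorem um_coe (t : F) :
    ((um t : Matrix.SpecialLinearGroup (Fin 2) F) : Matrix (Fin 2) (Fin 2) F) = !![1, t; 0, 1] :=
  rfl

@[simp] theorem dm_coe (a : Fˣ) :
    ((dm a : Matrix.SpecialLinearGroup (Fin 2) F) : Matrix (Fin 2) (Fin 2) F)
      = !![(a : F), 0; 0, ((a⁻¹ : Fˣ) : F)] := rfl

theorem um_mul (s t : F) : um s * um t = um (s + t) := by
  apply Subtype.ext
  rw [Matrix.SpecialLinearGroup.coe_mul]
  simp [Matrix.SpecialLinearGroup.coe_mul, um, Matrix.mul_fin_two]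
  ring_nf

theorem um_zero : (um (0 : F)) = 1 := by
  apply Subtype.ext
  simp [um]
  ext i j
  fin_cases i <;> fin_cases j <;> simp

theorem um_inj : Function.Injective (um : F → Matrix.SpecialLinearGroup (Fin 2) F) := by
  intro s t h
  have := congrArg
    (fun g => ((g : Matrix.SpecialLinearGroup (Fin 2) F) : Matrix (Fin 2) (Fin 2) F) 0 1) h
  simpa [um] using this

theorem dm_one : (dm (1 : Fˣ)) = 1 := by
  apply Subtype.ext
  simp [dm]
  ext i j
  fin_cases i <;> fin_cases j <;> simp

theorem dm_mul_dm_inv (a : Fˣ) : dm a * dm a⁻¹ = 1 := by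
  apply Subtype.ext
  rw [Matrix.SpecialLinearGroup.coe_mul]
  simp [dm, Matrix.SpecialLinearGroup.coe_mul, Matrix.mul_fin_two]
  ext i j
  fin_cases i <;> fin_cases j <;> simp

theorem dm_inv (a : Fˣ) : (dm a)⁻¹ = dm a⁻¹ :=
  inv_eq_of_mul_eq_one_right (dm_mul_dm_inv a)

theorem dm_conj_um (a : Fˣ) (t : F) :
    dm a * um t * (dm a)⁻¹ = um ((a : F) * (a : F) * t) := by
  rw [dm_inv]
  apply Subtype.ext
  show ((dm a : Matrix.SpecialLinearGroup (Fin 2) F) : Matrix (Fin 2) (Fin 2) F) * um t * dm a⁻¹ = _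
  ext i j
  fin_cases i <;> fin_cases j <;>
    simp [dm, um, Matrix.mul_fin_two] <;>
    ring

end SL

end Stmt9Aux
open Stmt9Aux MulAction

/-- for `q = 2^c`, `G = SL_2(F_q)`, `U` the upper unitriangular subgroup,
`B` the Borel subgroup of upper triangular matrices (the normalizer of `U`), and `H ≤ U`
of index 2: every base for the action of `B` on `B/H` has size at least `c`,
`Irred(G, G/H) ≤ c`, and consequently `Base(G, G/H) = c`. -/
theorem stmt_9 (c : ℕ) (hc : 1 < c)
    (U B H : Subgroup (Matrix.SpecialLinearGroup (Fin 2) (GaloisField 2 c)))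
    (hU : ∀ g : Matrix.SpecialLinearGroup (Fin 2) (GaloisField 2 c),
      g ∈ U ↔ ((g : Matrix (Fin 2) (Fin 2) (GaloisField 2 c)) 1 0 = 0 ∧
        (g : Matrix (Fin 2) (Fin 2) (GaloisField 2 c)) 0 0 = 1))
    (hB : ∀ g : Matrix.SpecialLinearGroup (Fin 2) (GaloisField 2 c),
      g ∈ B ↔ (g : Matrix (Fin 2) (Fin 2) (GaloisField 2 c)) 1 0 = 0)
    (hBU : B = Subgroup.normalizer (U : Set (Matrix.SpecialLinearGroup (Fin 2) (GaloisField 2 c))))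
    (hHU : H ≤ U) (hidx : H.relIndex U = 2) :
    (∀ l : List (B ⧸ H.subgroupOf B), IsBase B l → c ≤ l.length) ∧
    irredStat (Matrix.SpecialLinearGroup (Fin 2) (GaloisField 2 c))
      (Matrix.SpecialLinearGroup (Fin 2) (GaloisField 2 c) ⧸ H) ≤ (c : ℕ∞) ∧
    maxMinBase (Matrix.SpecialLinearGroup (Fin 2) (GaloisField 2 c))
      (Matrix.SpecialLinearGroup (Fin 2) (GaloisField 2 c) ⧸ H) = (c : ℕ∞) := by
  classical
  have hc0 : c ≠ 0 := by omega
  have hc1 : 1 ≤ c := by omega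
  haveI : Finite (Matrix.SpecialLinearGroup (Fin 2) (GaloisField 2 c)) :=
    Finite.of_injective (fun g : (Matrix.SpecialLinearGroup (Fin 2) (GaloisField 2 c)) => (g : Matrix (Fin 2) (Fin 2) (GaloisField 2 c)))
      Subtype.val_injective
  -- basic membership facts
  have um_memU : ∀ t : (GaloisField 2 c), um t ∈ U := by
    intro t
    exact (hU _).2 ⟨by simp, by simp⟩
  have memU_iff : ∀ g : (Matrix.SpecialLinearGroup (Fin 2) (GaloisField 2 c)), g ∈ U ↔ ∃ t : (GaloisField 2 c), g = um t := by
    intro g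
    constructor
    · intro hg
      obtain ⟨h10, h00⟩ := (hU g).1 hg
      have hdet : (g : Matrix (Fin 2) (Fin 2) (GaloisField 2 c)).det = 1 := g.2
      rw [Matrix.det_fin_two, h10, h00] at hdet
      have h11 : (g : Matrix (Fin 2) (Fin 2) (GaloisField 2 c)) 1 1 = 1 := by simpa using hdet
      refine ⟨(g : Matrix (Fin 2) (Fin 2) (GaloisField 2 c)) 0 1, ?_⟩
      apply Subtype.ext
      ext i j
      fin_cases i <;> fin_cases j <;> simp [um, h10, h00, h11]
    · rintro ⟨t, rfl⟩; exact um_memU t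
  have hUB : U ≤ B := fun g hg => (hB g).2 ((hU g).1 hg).1
  -- cardinalities
  have cardF : Nat.card (GaloisField 2 c) = 2 ^ c := GaloisField.card 2 c hc0
  have cardU : Nat.card U = 2 ^ c := by
    rw [← cardF]
    refine Nat.card_congr (Equiv.symm (Equiv.ofBijective
      (fun t : (GaloisField 2 c) => (⟨um t, um_memU t⟩ : U)) ⟨?_, ?_⟩))
    · intro s t hst
      exact um_inj (congrArg Subtype.val hst)
    · intro g
      obtain ⟨t, ht⟩ := (memU_iff g).1 g.2
      exact ⟨t, Subtype.ext ht.symm⟩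
  have cardH : 2 * Nat.card H = 2 ^ c := by
    have h1 := Subgroup.card_mul_index (H.subgroupOf U)
    have h2 : (H.subgroupOf U).index = 2 := hidx
    have h3 : Nat.card (H.subgroupOf U) = Nat.card H :=
      Nat.card_congr (Subgroup.subgroupOfEquivOfLe hHU).toEquiv
    rw [h2, h3, cardU] at h1
    omega
  have cardHval : Nat.card H = 2 ^ (c - 1) := by
    have hp : (2:ℕ) ^ c = 2 * 2 ^ (c - 1) := by
      rw [← pow_succ']; congr 1; omega
    omega
  ---------------------------------------------------------------------------
  -- PART 1 : the action of B on B / H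
  ---------------------------------------------------------------------------
  have hnorm : ∀ b : B, ∀ g : (Matrix.SpecialLinearGroup (Fin 2) (GaloisField 2 c)), g ∈ U → (↑b) * g * (↑b)⁻¹ ∈ U := by
    intro b g hg
    have hb : (b : (Matrix.SpecialLinearGroup (Fin 2) (GaloisField 2 c))) ∈ Subgroup.normalizer (U : Set (Matrix.SpecialLinearGroup (Fin 2) (GaloisField 2 c))) := by rw [← hBU]; exact b.2
    exact (Subgroup.mem_normalizer_iff.1 hb g).1 hg
  have cardU' : Nat.card (U.subgroupOf B) = 2 ^ c :=
    (Nat.card_congr (Subgroup.subgroupOfEquivOfLe hUB).toEquiv).trans cardU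
  have card_stabB : ∀ x : B ⧸ H.subgroupOf B,
      Nat.card ((stabilizer B x).subgroupOf (U.subgroupOf B)) = Nat.card H := by
    intro x
    obtain ⟨b, rfl⟩ := QuotientGroup.mk_surjective x
    have h3 : Nat.card (H.subgroupOf B) = Nat.card H :=
      Nat.card_congr (Subgroup.subgroupOfEquivOfLe (hHU.trans hUB)).toEquiv
    rw [← h3]
    symm
    apply Nat.card_congr
    refine
      { toFun := fun h =>
          ⟨⟨b * h.1 * b⁻¹, Subgroup.mem_subgroupOf.2 (by
              have hh : ((h.1 : ↥B) : (Matrix.SpecialLinearGroup (Fin 2) (GaloisField 2 c))) ∈ H :=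
                Subgroup.mem_subgroupOf.1 h.2
              simpa using hnorm b _ (hHU hh))⟩,
            Subgroup.mem_subgroupOf.2 (by
              rw [mem_stab_mk]
              show b⁻¹ * (b * h.1 * b⁻¹) * b ∈ H.subgroupOf B
              have he : b⁻¹ * (b * h.1 * b⁻¹) * b = h.1 := by group
              rw [he]
              exact h.2)⟩
        invFun := fun y =>
          ⟨b⁻¹ * (y.1 : ↥B) * b, (mem_stab_mk (H.subgroupOf B) b _).1
            (Subgroup.mem_subgroupOf.1 y.2)⟩
        left_inv := fun h => Subtype.ext (by
          show b⁻¹ * (b * ↑h * b⁻¹) * b = ↑h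
          group)
        right_inv := fun y => Subtype.ext (Subtype.ext (by
          show b * (b⁻¹ * ↑↑y * b) * b⁻¹ = ↑↑y
          group)) }
  have idxB : ∀ x : B ⧸ H.subgroupOf B,
      ((stabilizer B x).subgroupOf (U.subgroupOf B)).index ≤ 2 := by
    intro x
    have h2 : ((stabilizer B x).subgroupOf (U.subgroupOf B)).index = 2 := by
      apply index_subgroupOf_eq_two
      rw [card_stabB x, cardU']
      exact cardH
    omega
  have part1 : ∀ l : List (B ⧸ H.subgroupOf B), IsBase B l → c ≤ l.length := by
    intro l hl
    have hl' : listStab B l = ⊥ := hl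
    have h1 := index_listStab_le (U.subgroupOf B) l (fun x _ => idxB x)
    rw [hl', Subgroup.bot_subgroupOf, Subgroup.index_bot, cardU'] at h1
    exact (Nat.pow_le_pow_iff_right one_lt_two).1 h1
  ---------------------------------------------------------------------------
  -- PART 2 : irredundant sequences for G on G / H
  ---------------------------------------------------------------------------
  have stab_card_G : ∀ x : (Matrix.SpecialLinearGroup (Fin 2) (GaloisField 2 c)) ⧸ H, Nat.card (stabilizer (Matrix.SpecialLinearGroup (Fin 2) (GaloisField 2 c)) x) = 2 ^ (c - 1) := by
    intro x
    obtain ⟨g, rfl⟩ := QuotientGroup.mk_surjective x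
    rw [card_stab_mk, cardHval]
  have part2core : ∀ l : List ((Matrix.SpecialLinearGroup (Fin 2) (GaloisField 2 c)) ⧸ H), IsIrredundant (Matrix.SpecialLinearGroup (Fin 2) (GaloisField 2 c)) l → l.length ≤ c :=
    fun l hirr => length_le_of_irred hirr hc1 stab_card_G
  have part2 : irredStat (Matrix.SpecialLinearGroup (Fin 2) (GaloisField 2 c)) ((Matrix.SpecialLinearGroup (Fin 2) (GaloisField 2 c)) ⧸ H) ≤ (c : ℕ∞) := by
    apply sSup_le
    rintro n ⟨l, hirr, rfl⟩
    exact_mod_cast part2core l hirr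
  ---------------------------------------------------------------------------
  -- PART 3 : a minimal base of size exactly c
  ---------------------------------------------------------------------------
  have stab_le_U : ∀ a : (GaloisField 2 c)ˣ, stabilizer (Matrix.SpecialLinearGroup (Fin 2) (GaloisField 2 c)) ((dm a : (Matrix.SpecialLinearGroup (Fin 2) (GaloisField 2 c))) : (Matrix.SpecialLinearGroup (Fin 2) (GaloisField 2 c)) ⧸ H) ≤ U := by
    intro a g hg
    have h1 := (mem_stab_mk H (dm a) g).1 hg
    obtain ⟨t, ht⟩ := (memU_iff _).1 (hHU h1)
    have hg' : g = dm a * um t * (dm a)⁻¹ := by rw [← ht]; group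
    rw [hg', dm_conj_um]
    exact um_memU _
  have card_stabN : ∀ a : (GaloisField 2 c)ˣ,
      Nat.card ((stabilizer (Matrix.SpecialLinearGroup (Fin 2) (GaloisField 2 c)) ((dm a : (Matrix.SpecialLinearGroup (Fin 2) (GaloisField 2 c))) : (Matrix.SpecialLinearGroup (Fin 2) (GaloisField 2 c)) ⧸ H)).subgroupOf U) = Nat.card H := by
    intro a
    exact (Nat.card_congr (Subgroup.subgroupOfEquivOfLe (stab_le_U a)).toEquiv).trans
      (card_stab_mk H (dm a))
  have idxN : ∀ a : (GaloisField 2 c)ˣ,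
      ((stabilizer (Matrix.SpecialLinearGroup (Fin 2) (GaloisField 2 c)) ((dm a : (Matrix.SpecialLinearGroup (Fin 2) (GaloisField 2 c))) : (Matrix.SpecialLinearGroup (Fin 2) (GaloisField 2 c)) ⧸ H)).subgroupOf U).index = 2 := by
    intro a
    apply index_subgroupOf_eq_two
    rw [card_stabN a, cardU]
    exact cardH
  have sq_surj : ∀ z : (GaloisField 2 c), ∃ y : (GaloisField 2 c), y * y = z := by
    have hinj : Function.Injective (fun y : (GaloisField 2 c) => y * y) := by
      intro y w h
      rcases mul_self_eq_mul_self_iff.1 h with h' | h'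
      · exact h'
      · rw [h', CharTwo.neg_eq]
    exact fun z => Finite.surjective_of_injective hinj z
  have total : ∀ g : (Matrix.SpecialLinearGroup (Fin 2) (GaloisField 2 c)), (∀ a : (GaloisField 2 c)ˣ, g ∈ stabilizer (Matrix.SpecialLinearGroup (Fin 2) (GaloisField 2 c)) ((dm a : (Matrix.SpecialLinearGroup (Fin 2) (GaloisField 2 c))) : (Matrix.SpecialLinearGroup (Fin 2) (GaloisField 2 c)) ⧸ H)) → g = 1 := by
    intro g hg
    have hgH : g ∈ H := by
      have h1 := (mem_stab_mk H (dm 1) g).1 (hg 1)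
      rw [dm_one] at h1
      simpa using h1
    obtain ⟨t, rfl⟩ := (memU_iff g).1 (hHU hgH)
    by_cases ht : t = 0
    · rw [ht, um_zero]
    · exfalso
      have hUH : U ≤ H := by
        intro v hv
        obtain ⟨s, rfl⟩ := (memU_iff v).1 hv
        by_cases hs : s = 0
        · rw [hs, um_zero]; exact H.one_mem
        · obtain ⟨y, hy⟩ := sq_surj (t * s⁻¹)
          have hy0 : y ≠ 0 := by
            intro h0
            rw [h0, zero_mul] at hy
            exact ht (by field_simp at hy; simpa using hy.symm)
          have h2 := (mem_stab_mk H (dm (Units.mk0 y hy0)) (um t)).1 (hg (Units.mk0 y hy0))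
          have h3 : (dm (Units.mk0 y hy0))⁻¹ * um t * dm (Units.mk0 y hy0)
              = um (y⁻¹ * y⁻¹ * t) := by
            rw [dm_inv]
            have h4 := dm_conj_um (Units.mk0 y hy0)⁻¹ t
            rw [dm_inv, inv_inv] at h4
            simpa using h4
          rw [h3] at h2
          have h5 : y⁻¹ * y⁻¹ * t = s := by
            rw [← mul_inv, hy]
            field_simp
          rwa [h5] at h2
      have h6 : H.relIndex U = 1 := Subgroup.relIndex_eq_one.2 hUH
      omega
  have greedy : ∀ m, m ≤ c → ∃ lF : List (GaloisField 2 c)ˣ, lF.length = m ∧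
      Nat.card ((listStab (Matrix.SpecialLinearGroup (Fin 2) (GaloisField 2 c)) (lF.map fun a => ((dm a : (Matrix.SpecialLinearGroup (Fin 2) (GaloisField 2 c))) : (Matrix.SpecialLinearGroup (Fin 2) (GaloisField 2 c)) ⧸ H))).subgroupOf U)
        ≤ 2 ^ (c - m) := by
    intro m
    induction m with
    | zero =>
      intro _
      refine ⟨[], rfl, ?_⟩
      rw [List.map_nil, listStab_nil, Subgroup.top_subgroupOf, Subgroup.card_top, cardU]
      simp
    | succ m ih =>
      intro hm
      obtain ⟨lF, hlen, hcard⟩ := ih (by omega)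
      have hmem : ∀ x ∈ lF.map (fun a => ((dm a : (Matrix.SpecialLinearGroup (Fin 2) (GaloisField 2 c))) : (Matrix.SpecialLinearGroup (Fin 2) (GaloisField 2 c)) ⧸ H)),
          ((stabilizer (Matrix.SpecialLinearGroup (Fin 2) (GaloisField 2 c)) x).subgroupOf U).index ≤ 2 := by
        intro x hx
        obtain ⟨a, _, rfl⟩ := List.mem_map.1 hx
        rw [idxN a]
      have hidxle := index_listStab_le U _ hmem
      rw [List.length_map, hlen] at hidxle
      have hcm := Subgroup.card_mul_index
        ((listStab (Matrix.SpecialLinearGroup (Fin 2) (GaloisField 2 c)) (lF.map fun a => ((dm a : (Matrix.SpecialLinearGroup (Fin 2) (GaloisField 2 c))) : (Matrix.SpecialLinearGroup (Fin 2) (GaloisField 2 c)) ⧸ H))).subgroupOf U)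
      have hge : 2 ≤ Nat.card
          ((listStab (Matrix.SpecialLinearGroup (Fin 2) (GaloisField 2 c)) (lF.map fun a => ((dm a : (Matrix.SpecialLinearGroup (Fin 2) (GaloisField 2 c))) : (Matrix.SpecialLinearGroup (Fin 2) (GaloisField 2 c)) ⧸ H))).subgroupOf U) := by
        by_contra hlt
        push_neg at hlt
        have hpos : 0 < Nat.card
            ((listStab (Matrix.SpecialLinearGroup (Fin 2) (GaloisField 2 c)) (lF.map fun a => ((dm a : (Matrix.SpecialLinearGroup (Fin 2) (GaloisField 2 c))) : (Matrix.SpecialLinearGroup (Fin 2) (GaloisField 2 c)) ⧸ H))).subgroupOf U) :=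
          Nat.card_pos
        have hcard1 : Nat.card
            ((listStab (Matrix.SpecialLinearGroup (Fin 2) (GaloisField 2 c)) (lF.map fun a => ((dm a : (Matrix.SpecialLinearGroup (Fin 2) (GaloisField 2 c))) : (Matrix.SpecialLinearGroup (Fin 2) (GaloisField 2 c)) ⧸ H))).subgroupOf U) = 1 := by
          omega
        rw [hcard1, one_mul, cardU] at hcm
        have hcontra : (2:ℕ) ^ c ≤ 2 ^ m := hcm ▸ hidxle
        have := (Nat.pow_le_pow_iff_right one_lt_two).1 hcontra
        omega
      have hJne : (listStab (Matrix.SpecialLinearGroup (Fin 2) (GaloisField 2 c)) (lF.map fun a => ((dm a : (Matrix.SpecialLinearGroup (Fin 2) (GaloisField 2 c))) : (Matrix.SpecialLinearGroup (Fin 2) (GaloisField 2 c)) ⧸ H))).subgroupOf U ≠ ⊥ := by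
        intro hbot
        rw [hbot, Subgroup.card_bot] at hge
        omega
      obtain ⟨gU, hgU⟩ := Subgroup.ne_bot_iff_exists_ne_one.1 hJne
      have hgmem : ((gU : U) : (Matrix.SpecialLinearGroup (Fin 2) (GaloisField 2 c))) ∈ listStab (Matrix.SpecialLinearGroup (Fin 2) (GaloisField 2 c)) (lF.map fun a => ((dm a : (Matrix.SpecialLinearGroup (Fin 2) (GaloisField 2 c))) : (Matrix.SpecialLinearGroup (Fin 2) (GaloisField 2 c)) ⧸ H)) :=
        Subgroup.mem_subgroupOf.1 gU.2
      have hgne : ((gU : U) : (Matrix.SpecialLinearGroup (Fin 2) (GaloisField 2 c))) ≠ 1 := by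
        intro h1
        exact hgU (Subtype.ext (Subtype.ext h1))
      obtain ⟨a, ha⟩ : ∃ a : (GaloisField 2 c)ˣ, ((gU : U) : (Matrix.SpecialLinearGroup (Fin 2) (GaloisField 2 c))) ∉ stabilizer (Matrix.SpecialLinearGroup (Fin 2) (GaloisField 2 c)) ((dm a : (Matrix.SpecialLinearGroup (Fin 2) (GaloisField 2 c))) : (Matrix.SpecialLinearGroup (Fin 2) (GaloisField 2 c)) ⧸ H) := by
        by_contra hcon
        push_neg at hcon
        exact hgne (total _ hcon)
      refine ⟨a :: lF, by simp [hlen], ?_⟩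
      have hsplit : (listStab (Matrix.SpecialLinearGroup (Fin 2) (GaloisField 2 c)) ((a :: lF).map fun a => ((dm a : (Matrix.SpecialLinearGroup (Fin 2) (GaloisField 2 c))) : (Matrix.SpecialLinearGroup (Fin 2) (GaloisField 2 c)) ⧸ H))).subgroupOf U
          = (stabilizer (Matrix.SpecialLinearGroup (Fin 2) (GaloisField 2 c)) ((dm a : (Matrix.SpecialLinearGroup (Fin 2) (GaloisField 2 c))) : (Matrix.SpecialLinearGroup (Fin 2) (GaloisField 2 c)) ⧸ H)).subgroupOf U
            ⊓ (listStab (Matrix.SpecialLinearGroup (Fin 2) (GaloisField 2 c)) (lF.map fun a => ((dm a : (Matrix.SpecialLinearGroup (Fin 2) (GaloisField 2 c))) : (Matrix.SpecialLinearGroup (Fin 2) (GaloisField 2 c)) ⧸ H))).subgroupOf U := by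
        rw [List.map_cons, listStab_cons]
        ext x
        simp [Subgroup.mem_subgroupOf]
      have hlt : (stabilizer (Matrix.SpecialLinearGroup (Fin 2) (GaloisField 2 c)) ((dm a : (Matrix.SpecialLinearGroup (Fin 2) (GaloisField 2 c))) : (Matrix.SpecialLinearGroup (Fin 2) (GaloisField 2 c)) ⧸ H)).subgroupOf U
            ⊓ (listStab (Matrix.SpecialLinearGroup (Fin 2) (GaloisField 2 c)) (lF.map fun a => ((dm a : (Matrix.SpecialLinearGroup (Fin 2) (GaloisField 2 c))) : (Matrix.SpecialLinearGroup (Fin 2) (GaloisField 2 c)) ⧸ H))).subgroupOf U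
          < (listStab (Matrix.SpecialLinearGroup (Fin 2) (GaloisField 2 c)) (lF.map fun a => ((dm a : (Matrix.SpecialLinearGroup (Fin 2) (GaloisField 2 c))) : (Matrix.SpecialLinearGroup (Fin 2) (GaloisField 2 c)) ⧸ H))).subgroupOf U := by
        refine lt_of_le_of_ne inf_le_right ?_
        intro heq
        have h1 : (gU : U) ∈ (stabilizer (Matrix.SpecialLinearGroup (Fin 2) (GaloisField 2 c)) ((dm a : (Matrix.SpecialLinearGroup (Fin 2) (GaloisField 2 c))) : (Matrix.SpecialLinearGroup (Fin 2) (GaloisField 2 c)) ⧸ H)).subgroupOf U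
            ⊓ (listStab (Matrix.SpecialLinearGroup (Fin 2) (GaloisField 2 c)) (lF.map fun a => ((dm a : (Matrix.SpecialLinearGroup (Fin 2) (GaloisField 2 c))) : (Matrix.SpecialLinearGroup (Fin 2) (GaloisField 2 c)) ⧸ H))).subgroupOf U := by
          rw [heq]; exact gU.2
        exact ha (Subgroup.mem_subgroupOf.1 h1.1)
      have hhalf := halving hlt
      rw [hsplit]
      have hstep : (2:ℕ) ^ (c - m) = 2 * 2 ^ (c - (m + 1)) := by
        rw [← pow_succ']; congr 1; omega
      omega
  obtain ⟨lF, hlen, hcard1⟩ := greedy c le_rfl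
  have hcard1' :
      Nat.card ((listStab (Matrix.SpecialLinearGroup (Fin 2) (GaloisField 2 c)) (lF.map fun a => ((dm a : (Matrix.SpecialLinearGroup (Fin 2) (GaloisField 2 c))) : (Matrix.SpecialLinearGroup (Fin 2) (GaloisField 2 c)) ⧸ H))).subgroupOf U) = 1 := by
    have hpos : 0 < Nat.card
        ((listStab (Matrix.SpecialLinearGroup (Fin 2) (GaloisField 2 c)) (lF.map fun a => ((dm a : (Matrix.SpecialLinearGroup (Fin 2) (GaloisField 2 c))) : (Matrix.SpecialLinearGroup (Fin 2) (GaloisField 2 c)) ⧸ H))).subgroupOf U) := Nat.card_pos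
    simp only [Nat.sub_self, pow_zero] at hcard1
    omega
  have hJbot : (listStab (Matrix.SpecialLinearGroup (Fin 2) (GaloisField 2 c)) (lF.map fun a => ((dm a : (Matrix.SpecialLinearGroup (Fin 2) (GaloisField 2 c))) : (Matrix.SpecialLinearGroup (Fin 2) (GaloisField 2 c)) ⧸ H))).subgroupOf U = ⊥ :=
    Subgroup.card_eq_one.1 hcard1'
  have hlF_ne : lF ≠ [] := by
    intro h
    rw [h] at hlen
    simp at hlen
    omega
  have hbase : IsBase (Matrix.SpecialLinearGroup (Fin 2) (GaloisField 2 c)) (lF.map fun a => ((dm a : (Matrix.SpecialLinearGroup (Fin 2) (GaloisField 2 c))) : (Matrix.SpecialLinearGroup (Fin 2) (GaloisField 2 c)) ⧸ H)) := by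
    show listStab (Matrix.SpecialLinearGroup (Fin 2) (GaloisField 2 c)) (lF.map fun a => ((dm a : (Matrix.SpecialLinearGroup (Fin 2) (GaloisField 2 c))) : (Matrix.SpecialLinearGroup (Fin 2) (GaloisField 2 c)) ⧸ H)) = ⊥
    apply (Subgroup.eq_bot_iff_forall _).2
    intro g hg
    obtain ⟨a0, l0, hcons⟩ := List.exists_cons_of_ne_nil hlF_ne
    have hgU : g ∈ U := by
      apply stab_le_U a0
      apply mem_listStab.1 hg
      rw [hcons]
      simp
    have hmem2 : (⟨g, hgU⟩ : U) ∈
        (listStab (Matrix.SpecialLinearGroup (Fin 2) (GaloisField 2 c)) (lF.map fun a => ((dm a : (Matrix.SpecialLinearGroup (Fin 2) (GaloisField 2 c))) : (Matrix.SpecialLinearGroup (Fin 2) (GaloisField 2 c)) ⧸ H))).subgroupOf U :=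
      Subgroup.mem_subgroupOf.2 hg
    rw [hJbot] at hmem2
    exact congrArg Subtype.val (Subgroup.mem_bot.1 hmem2)
  have hmin : IsMinimalBase (Matrix.SpecialLinearGroup (Fin 2) (GaloisField 2 c)) (lF.map fun a => ((dm a : (Matrix.SpecialLinearGroup (Fin 2) (GaloisField 2 c))) : (Matrix.SpecialLinearGroup (Fin 2) (GaloisField 2 c)) ⧸ H)) := by
    refine ⟨hbase, ?_⟩
    intro l' hsub hne hbase'
    have hlen' : l'.length < c := by
      have h1 := hsub.length_le
      rw [List.length_map, hlen] at h1
      rcases lt_or_eq_of_le h1 with h | h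
      · exact h
      · exact absurd (hsub.eq_of_length (by rw [List.length_map, hlen, h])) hne
    have hmem' : ∀ x ∈ l', ((stabilizer (Matrix.SpecialLinearGroup (Fin 2) (GaloisField 2 c)) x).subgroupOf U).index ≤ 2 := by
      intro x hx
      obtain ⟨a, _, rfl⟩ := List.mem_map.1 (hsub.subset hx)
      rw [idxN a]
    have h1 := index_listStab_le U l' hmem'
    have hb2 : listStab (Matrix.SpecialLinearGroup (Fin 2) (GaloisField 2 c)) l' = ⊥ := hbase'
    rw [hb2, Subgroup.bot_subgroupOf, Subgroup.index_bot, cardU] at h1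
    have := (Nat.pow_le_pow_iff_right one_lt_two).1 h1
    omega
  refine ⟨part1, part2, ?_⟩
  apply le_antisymm
  · apply sSup_le
    rintro n ⟨l, hminl, rfl⟩
    exact_mod_cast part2core l (minimalBase_irredundant hminl)
  · apply le_sSup
    refine ⟨lF.map fun a => ((dm a : (Matrix.SpecialLinearGroup (Fin 2) (GaloisField 2 c))) : (Matrix.SpecialLinearGroup (Fin 2) (GaloisField 2 c)) ⧸ H), hmin, ?_⟩
    rw [List.length_map, hlen]
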